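/- Let ν ≥ 1, let f : ℝ^ν → ℝ be C², let u₀ ∈ ℝ^ν, and set H_{ab} := ∂_a∂_b f(u₀). Let Ξ be an invertible symmetric ν×ν real matrix with inverse entries Ξ^{ab}. On V = ℝ^{ν+2} with basis (X, U₁, …, U_ν, Y), let g be the symmetric bilinear form with g(X,X) = -2f(u₀), g(X,Y) = 1, g(U_a,U_b) = Ξ_{ab}, g(Y,Y) = 0, g(X,U_a) = g(Y,U_a) = 0, and let A be the 4-linear form whose only possibly nonzero components on basis vectors are those obtained from A(X,U_a,U_b,X) = H_{ab} via the symmetries A(x,y,z,w) = A(z,w,x,y) = -A(y,x,z,w). Then: (a) g is nondegenerate; (b) A is an algebraic curvature tensor; (c) the curvature operators satisfy 𝒜(X,U_a)U_b = H_{ab} Y, 𝒜(X,U_a)X = -Σ_{b,c} Ξ^{bc} H_{ac} U_b, and 𝒜(X,U_a)Y = 0; (d) the model (V,g,A) is skew Tsankov, i.e. 𝒜(ξ₁,ξ₂) ∘ 𝒜(ξ₃,ξ₄) = 𝒜(ξ₃,ξ₄) ∘ 𝒜(ξ₁,ξ₂) for all ξᵢ ∈ V. -/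

import Mathlib

/-- The curvature model of a Fiedler manifold at a point.  On
`V = ℝ^{ν+2} = ℝ × (Fin ν → ℝ) × ℝ` with basis `X = (1,0,0)`, `U_a = (0, e_a, 0)`,
`Y = (0,0,1)`, let `g` be the symmetric bilinear form with `g(X,X) = -2f(u₀)`,
`g(X,Y) = 1`, `g(U_a,U_b) = Ξ_{ab}`, `g(Y,Y) = 0`, `g(X,U_a) = g(Y,U_a) = 0`, and let
`A` be the 4-linear form whose only possibly nonzero components on basis vectors are
those obtained from `A(X,U_a,U_b,X) = H_{ab}` (with `H_{ab} = ∂_a∂_b f(u₀)`) via the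
curvature symmetries, i.e. the multilinear extension
`A(v₁,v₂,v₃,v₄) = -∑_{a,b} H_{ab} θ_a(v₁,v₂) θ_b(v₃,v₄)` with
`θ_a(v,w) = v₀ w_a - w₀ v_a`.  Then: (a) `g` is nondegenerate; (b) `A` is an algebraic
curvature tensor; (c) `𝓐(X,U_a)U_b = H_{ab} Y`, `𝓐(X,U_a)X = -∑ Ξ^{bc} H_{ac} U_b`,
`𝓐(X,U_a)Y = 0`; (d) the model is skew Tsankov. -/
theorem fiedler_model_skewTsankov
    (ν : ℕ) (hν : 1 ≤ ν)
    (f : (Fin ν → ℝ) → ℝ) (hf : ContDiff ℝ 2 f) (u₀ : Fin ν → ℝ)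
    (H : Fin ν → Fin ν → ℝ)
    (hH : ∀ a b, H a b =
      fderiv ℝ (fun u => fderiv ℝ f u (Pi.single b 1)) u₀ (Pi.single a 1))
    (Ξ : Matrix (Fin ν) (Fin ν) ℝ) (hΞsym : Ξ.IsSymm) (hΞinv : IsUnit Ξ.det)
    (X : ℝ × (Fin ν → ℝ) × ℝ) (hX : X = (1, 0, 0))
    (U : Fin ν → ℝ × (Fin ν → ℝ) × ℝ) (hU : ∀ a, U a = (0, Pi.single a 1, 0))
    (Y : ℝ × (Fin ν → ℝ) × ℝ) (hY : Y = (0, 0, 1))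
    (g : (ℝ × (Fin ν → ℝ) × ℝ) → (ℝ × (Fin ν → ℝ) × ℝ) → ℝ)
    (hg : ∀ v w, g v w = -2 * f u₀ * v.1 * w.1 + v.1 * w.2.2 + v.2.2 * w.1 +
      ∑ a, ∑ b, Ξ a b * v.2.1 a * w.2.1 b)
    (A : (ℝ × (Fin ν → ℝ) × ℝ) → (ℝ × (Fin ν → ℝ) × ℝ) →
         (ℝ × (Fin ν → ℝ) × ℝ) → (ℝ × (Fin ν → ℝ) × ℝ) → ℝ)
    (hA : ∀ v₁ v₂ v₃ v₄, A v₁ v₂ v₃ v₄ =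
      -∑ a, ∑ b, H a b * (v₁.1 * v₂.2.1 a - v₂.1 * v₁.2.1 a) *
        (v₃.1 * v₄.2.1 b - v₄.1 * v₃.2.1 b))
    (𝓐 : (ℝ × (Fin ν → ℝ) × ℝ) → (ℝ × (Fin ν → ℝ) × ℝ) →
      ((ℝ × (Fin ν → ℝ) × ℝ) →ₗ[ℝ] (ℝ × (Fin ν → ℝ) × ℝ)))
    (h𝓐 : ∀ ξ₁ ξ₂ z w, g (𝓐 ξ₁ ξ₂ z) w = A ξ₁ ξ₂ z w) :
    -- (a) g is nondegenerate
    (∀ v, (∀ w, g v w = 0) → v = 0) ∧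
    -- (b) A is an algebraic curvature tensor
    (∀ a b c d, A a b c d = A c d a b) ∧
    (∀ a b c d, A a b c d = - A b a c d) ∧
    (∀ a b c d, A a b c d + A b c a d + A c a b d = 0) ∧
    (∀ a b, A X (U a) (U b) X = H a b) ∧
    -- (c) the curvature operators
    (∀ a b, 𝓐 X (U a) (U b) = H a b • Y) ∧
    (∀ a, 𝓐 X (U a) X = - ∑ b, ∑ c, (Ξ⁻¹ b c * H a c) • U b) ∧
    (∀ a, 𝓐 X (U a) Y = 0) ∧
    -- (d) the model is skew Tsankov
    (∀ ξ₁ ξ₂ ξ₃ ξ₄, (𝓐 ξ₁ ξ₂) ∘ₗ (𝓐 ξ₃ ξ₄) = (𝓐 ξ₃ ξ₄) ∘ₗ (𝓐 ξ₁ ξ₂)) := by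
  -- symmetry of the Hessian
  have hfd : DifferentiableAt ℝ (fderiv ℝ f) u₀ :=
    ((hf.fderiv_right (m := 1) (by norm_num)).differentiable (by norm_num)) u₀
  have hflip : ∀ a b : Fin ν, fderiv ℝ (fun u => fderiv ℝ f u (Pi.single b 1)) u₀ (Pi.single a 1)
      = fderiv ℝ (fderiv ℝ f) u₀ (Pi.single a 1) (Pi.single b 1) := by
    intro a b
    rw [fderiv_clm_apply hfd (differentiableAt_const _)]
    simp
  have hsymm : IsSymmSndFDerivAt ℝ f u₀ :=
    (hf.contDiffAt).isSymmSndFDerivAt (by norm_num)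
  have hHs : ∀ a b, H a b = H b a := by
    intro a b; rw [hH, hH, hflip, hflip, hsymm]
  -- matrix identities
  have hmat : ∀ (c : Fin ν → ℝ) (b : Fin ν), ∑ a, Ξ a b * ∑ e, Ξ⁻¹ a e * c e = c b := by
    intro c b
    have h1 : Ξ * Ξ⁻¹ = 1 := Matrix.mul_nonsing_inv Ξ hΞinv
    calc ∑ a, Ξ a b * ∑ e, Ξ⁻¹ a e * c e
        = ∑ e, (∑ a, Ξ b a * Ξ⁻¹ a e) * c e := by
          simp_rw [Finset.mul_sum, Finset.sum_mul]
          rw [Finset.sum_comm]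
          exact Finset.sum_congr rfl fun e _ => Finset.sum_congr rfl fun a _ => by
            rw [hΞsym.apply b a]; ring
      _ = ∑ e, (Ξ * Ξ⁻¹) b e * c e := by simp_rw [Matrix.mul_apply]
      _ = c b := by rw [h1]; simp [Matrix.one_apply]
  have hΞi : ∀ b e, Ξ⁻¹ b e = Ξ⁻¹ e b := by
    have h : (Ξ⁻¹).IsSymm := by
      rw [Matrix.IsSymm, Matrix.transpose_nonsing_inv, hΞsym.eq]
    exact fun b e => h.apply e b
  -- (a) nondegeneracy
  have nondeg : ∀ v : ℝ × (Fin ν → ℝ) × ℝ, (∀ w, g v w = 0) → v = 0 := by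
    intro v hv
    have h1 : v.1 = 0 := by have := hv (0, 0, 1); rw [hg] at this; simpa using this
    have h3 : v.2.2 = 0 := by
      have := hv (1, 0, 0); rw [hg] at this; simp [h1] at this; exact this
    have h2 : v.2.1 = 0 := by
      have hval : ∀ c, ∑ a, Ξ a c * v.2.1 a = 0 := by
        intro c
        have := hv (0, Pi.single c 1, 0)
        rw [hg] at this
        simpa [Pi.single_apply, Finset.mul_sum, mul_ite] using this
      have hvm : Matrix.vecMul v.2.1 Ξ = 0 := by
        funext c
        simpa [Matrix.vecMul, dotProduct, mul_comm] using hval c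
      have h5 : Matrix.vecMul (Matrix.vecMul v.2.1 Ξ) Ξ⁻¹ = Matrix.vecMul 0 Ξ⁻¹ := by rw [hvm]
      rwa [Matrix.vecMul_vecMul, Matrix.mul_nonsing_inv Ξ hΞinv, Matrix.vecMul_one,
        Matrix.zero_vecMul] at h5
    exact Prod.ext h1 (Prod.ext h2 h3)
  -- subtraction lemma for g
  have gsub : ∀ x y w, g (x - y) w = g x w - g y w := by
    intro x y w
    simp only [hg, Prod.fst_sub, Prod.snd_sub, Pi.sub_apply, mul_sub, sub_mul,
      Finset.sum_sub_distrib]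
    ring
  -- key formula for the curvature operator
  have key : ∀ ξ₁ ξ₂ z, 𝓐 ξ₁ ξ₂ z =
      ((0 : ℝ),
       (fun d => -z.1 * ∑ e, Ξ⁻¹ d e * ∑ a, H a e * (ξ₁.1 * ξ₂.2.1 a - ξ₂.1 * ξ₁.2.1 a)),
       ∑ b, (∑ a, H a b * (ξ₁.1 * ξ₂.2.1 a - ξ₂.1 * ξ₁.2.1 a)) * z.2.1 b) := by
    intro ξ₁ ξ₂ z
    set c : Fin ν → ℝ := fun b => ∑ a, H a b * (ξ₁.1 * ξ₂.2.1 a - ξ₂.1 * ξ₁.2.1 a) with hc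
    set q : ℝ × (Fin ν → ℝ) × ℝ :=
      ((0 : ℝ), (fun d => -z.1 * ∑ e, Ξ⁻¹ d e * c e), ∑ b, c b * z.2.1 b) with hq
    have h0 : ∀ w, g (𝓐 ξ₁ ξ₂ z - q) w = 0 := by
      intro w
      rw [gsub, h𝓐, hA]
      have hgq : g q w = (∑ b, c b * z.2.1 b) * w.1 - z.1 * ∑ b, c b * w.2.1 b := by
        rw [hg]
        have : ∑ a, ∑ b, Ξ a b * (q.2.1 a) * w.2.1 b = -(z.1 * ∑ b, c b * w.2.1 b) := by
          have : ∀ b, ∑ a, Ξ a b * (q.2.1 a) = -z.1 * c b := by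
            intro b
            have := hmat c b
            calc ∑ a, Ξ a b * q.2.1 a
                = -z.1 * ∑ a, Ξ a b * ∑ e, Ξ⁻¹ a e * c e := by
                  simp only [hq, Finset.mul_sum]
                  exact Finset.sum_congr rfl fun a _ =>
                    Finset.sum_congr rfl fun x _ => by ring
              _ = -z.1 * c b := by rw [hmat]
          rw [Finset.sum_comm]
          calc ∑ b, ∑ a, Ξ a b * q.2.1 a * w.2.1 b
              = ∑ b, (-z.1 * c b) * w.2.1 b := by
                refine Finset.sum_congr rfl fun b _ => ?_
                rw [← Finset.sum_mul, this b]
            _ = -(z.1 * ∑ b, c b * w.2.1 b) := by rw [Finset.mul_sum]; simp [Finset.sum_neg_distrib]; exact Finset.sum_congr rfl fun b _ => by ring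
        rw [this]
        simp only [hq]
        ring
      have hAzw : -(∑ a, ∑ b, H a b * (ξ₁.1 * ξ₂.2.1 a - ξ₂.1 * ξ₁.2.1 a) *
          (z.1 * w.2.1 b - w.1 * z.2.1 b))
          = (∑ b, c b * z.2.1 b) * w.1 - z.1 * ∑ b, c b * w.2.1 b := by
        rw [Finset.sum_comm, Finset.sum_mul, Finset.mul_sum, ← Finset.sum_sub_distrib,
          ← Finset.sum_neg_distrib]
        refine Finset.sum_congr rfl fun b _ => ?_
        simp only [hc, Finset.sum_mul, Finset.mul_sum, ← Finset.sum_sub_distrib,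
          ← Finset.sum_neg_distrib]
        exact Finset.sum_congr rfl fun a _ => by ring
      rw [hAzw, hgq]
      ring
    have := nondeg _ h0
    exact sub_eq_zero.mp this
  refine ⟨nondeg, ?_, ?_, ?_, ?_, ?_, ?_, ?_, ?_⟩
  · -- A a b c d = A c d a b
    intro a b c d
    rw [hA, hA]
    congr 1
    rw [Finset.sum_comm]
    exact Finset.sum_congr rfl fun x _ => Finset.sum_congr rfl fun y _ => by
      rw [hHs x y]; ring
  · intro a b c d
    rw [hA, hA, ← Finset.sum_neg_distrib, neg_neg]
    exact Finset.sum_congr rfl fun x _ => by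
      rw [← Finset.sum_neg_distrib]
      exact Finset.sum_congr rfl fun y _ => by ring
  · intro a b c d
    rw [hA, hA, hA]
    have hb : (∑ x, ∑ y, (H x y * (a.1 * b.2.1 x - b.1 * a.2.1 x) * (c.1 * d.2.1 y - d.1 * c.2.1 y)
        + H x y * (b.1 * c.2.1 x - c.1 * b.2.1 x) * (a.1 * d.2.1 y - d.1 * a.2.1 y)
        + H x y * (c.1 * a.2.1 x - a.1 * c.2.1 x) * (b.1 * d.2.1 y - d.1 * b.2.1 y))) = 0 := by
      set T : Fin ν → Fin ν → ℝ := fun x y =>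
        H x y * (a.1 * b.2.1 x - b.1 * a.2.1 x) * (c.1 * d.2.1 y - d.1 * c.2.1 y)
        + H x y * (b.1 * c.2.1 x - c.1 * b.2.1 x) * (a.1 * d.2.1 y - d.1 * a.2.1 y)
        + H x y * (c.1 * a.2.1 x - a.1 * c.2.1 x) * (b.1 * d.2.1 y - d.1 * b.2.1 y) with hT
      have hTsum : ∀ x y, T x y + T y x = 0 := by
        intro x y
        simp only [hT]
        rw [hHs x y]
        ring
      have h1 : (∑ x, ∑ y, T x y) = ∑ x, ∑ y, T y x := Finset.sum_comm
      have h2 : (∑ x, ∑ y, T x y) + (∑ x, ∑ y, T y x) = 0 := by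
        rw [← Finset.sum_add_distrib]
        simp only [← Finset.sum_add_distrib]
        simp [hTsum]
      rw [← h1] at h2
      linarith
    simp only [Finset.sum_add_distrib] at hb
    linarith
  · intro a b
    rw [hA, hX, hU, hU]
    simp [Pi.single_apply, mul_ite, Finset.sum_ite_eq]
  · -- 𝓐 X (U a) (U b) = H a b • Y
    intro a b
    rw [key, hX, hU, hU, hY]
    refine Prod.ext ?_ (Prod.ext ?_ ?_)
    · simp
    · funext d; simp
    · simp [Pi.single_apply, mul_ite, Finset.sum_ite_eq]
  · -- 𝓐 X (U a) X
    intro a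
    rw [key, hX]
    simp only [hU]
    refine Prod.ext ?_ (Prod.ext ?_ ?_)
    · simp [Prod.fst_sum]
    · funext d
      simp only [Pi.single_apply, mul_ite, mul_one, mul_zero, Finset.sum_ite_eq,
        Finset.mem_univ, if_true]
      simp [Prod.snd_sum, Prod.fst_sum, Finset.sum_apply, Pi.single_apply, mul_ite,
        Finset.sum_ite_eq, hHs]
    · simp [Prod.snd_sum]
  · intro a
    rw [key, hX, hU, hY]
    refine Prod.ext rfl (Prod.ext ?_ ?_)
    · funext d; simp
    · simp
  · -- skew Tsankov
    have comp : ∀ ξ₁ ξ₂ ξ₃ ξ₄ z, 𝓐 ξ₃ ξ₄ (𝓐 ξ₁ ξ₂ z) =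
        ((0:ℝ), (fun _ => (0:ℝ)),
         ∑ b, (∑ a, H a b * (ξ₃.1 * ξ₄.2.1 a - ξ₄.1 * ξ₃.2.1 a)) *
           (-z.1 * ∑ e, Ξ⁻¹ b e * ∑ a, H a e * (ξ₁.1 * ξ₂.2.1 a - ξ₂.1 * ξ₁.2.1 a))) := by
      intro ξ₁ ξ₂ ξ₃ ξ₄ z
      rw [key ξ₁ ξ₂ z, key ξ₃ ξ₄]
      refine Prod.ext rfl (Prod.ext ?_ rfl)
      funext d; simp
    have hgen : ∀ (z1 : ℝ) (c c' : Fin ν → ℝ),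
        ∑ b, c' b * (-z1 * ∑ e, Ξ⁻¹ b e * c e) = ∑ b, c b * (-z1 * ∑ e, Ξ⁻¹ b e * c' e) := by
      intro z1 c c'
      simp only [Finset.mul_sum]
      rw [Finset.sum_comm]
      refine Finset.sum_congr rfl fun x _ => Finset.sum_congr rfl fun y _ => ?_
      rw [hΞi y x]
      ring
    intro ξ₁ ξ₂ ξ₃ ξ₄
    apply LinearMap.ext
    intro z
    simp only [LinearMap.comp_apply]
    rw [comp ξ₁ ξ₂ ξ₃ ξ₄ z, comp ξ₃ ξ₄ ξ₁ ξ₂ z]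
    exact Prod.ext rfl (Prod.ext rfl (hgen z.1 _ _))
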